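/- Let G be a finite simple graph with no isolated vertex. Then there exists a minimum ev-dominating set M of G such that no two distinct edges of M share a vertex; consequently, γ_pr(G) ≤ 2·γ_ev(G). -/

import Mathlib

open SimpleGraph

variable {V : Type*}

/-- `D` is a dominating set of `G`: every vertex outside `D` has a neighbor in `D`. -/
def IsDomSet (G : SimpleGraph V) (D : Set V) : Prop :=
  ∀ v ∉ D, ∃ u ∈ D, G.Adj u v

/-- The edge `e` ev-dominates the vertex `v`: `e` is incident to `v` or to a neighbor of `v`. -/
def EvDom (G : SimpleGraph V) (e : Sym2 V) (v : V) : Prop :=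
  v ∈ e ∨ ∃ u ∈ e, G.Adj u v

/-- `M` is an edge-vertex dominating set of `G`. -/
def IsEvDomSet (G : SimpleGraph V) (M : Set (Sym2 V)) : Prop :=
  M ⊆ G.edgeSet ∧ ∀ v : V, ∃ e ∈ M, EvDom G e v

/-- `M` is a minimum edge-vertex dominating set of `G`. -/
def IsMinEvDomSet (G : SimpleGraph V) (M : Set (Sym2 V)) : Prop :=
  IsEvDomSet G M ∧ ∀ M' : Set (Sym2 V), IsEvDomSet G M' → M.ncard ≤ M'.ncard

/-- The edge-vertex domination number `γ_ev(G)`. -/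
noncomputable def evNum (G : SimpleGraph V) : ℕ :=
  sInf {n | ∃ M : Set (Sym2 V), IsEvDomSet G M ∧ M.ncard = n}

/-- The set of all endpoints of edges in `M`. -/
def edgeVerts (M : Set (Sym2 V)) : Set V := {v | ∃ e ∈ M, v ∈ e}

/-- `M` is a perfect matching of the induced subgraph `G[D]`: a set of edges of `G`
with all endpoints in `D`, such that every vertex of `D` lies in exactly one edge of `M`. -/
def IsPMOn (G : SimpleGraph V) (D : Set V) (M : Set (Sym2 V)) : Prop :=
  M ⊆ G.edgeSet ∧ (∀ e ∈ M, ∀ v ∈ e, v ∈ D) ∧ ∀ v ∈ D, ∃! e, e ∈ M ∧ v ∈ e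

/-- `D` is a paired-dominating set of `G`. -/
def IsPairedDomSet (G : SimpleGraph V) (D : Set V) : Prop :=
  IsDomSet G D ∧ ∃ M : Set (Sym2 V), IsPMOn G D M

/-- `D` is a minimum paired-dominating set of `G`. -/
def IsMinPairedDomSet (G : SimpleGraph V) (D : Set V) : Prop :=
  IsPairedDomSet G D ∧ ∀ D' : Set V, IsPairedDomSet G D' → D.ncard ≤ D'.ncard

/-- The paired-domination number `γ_pr(G)`. -/
noncomputable def prNum (G : SimpleGraph V) : ℕ :=
  sInf {n | ∃ D : Set V, IsPairedDomSet G D ∧ D.ncard = n}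

/-- No two distinct edges of `M` share a vertex. -/
def NoSharedVertex (M : Set (Sym2 V)) : Prop :=
  ∀ e ∈ M, ∀ f ∈ M, e ≠ f → ∀ v : V, v ∈ e → v ∉ f

/-- `G` has no isolated vertex. -/
def NoIsolated (G : SimpleGraph V) : Prop := ∀ v : V, ∃ u, G.Adj u v

/- ### Auxiliary lemmas -/

lemma aux_edge_rep {G : SimpleGraph V} {f : Sym2 V} {v : V} (hf : f ∈ G.edgeSet) (hv : v ∈ f) :
    ∃ w, G.Adj v w ∧ f = s(v, w) := by
  induction f using Sym2.ind with
  | _ a b =>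
    rw [Sym2.mem_iff] at hv
    rcases hv with rfl | rfl
    · exact ⟨b, hf, rfl⟩
    · exact ⟨a, hf.symm, Sym2.eq_swap⟩

lemma aux_edge_eq {e : Sym2 V} {v w : V}
    (hv : v ∈ e) (hw : w ∈ e) (hne : v ≠ w) : e = s(v, w) :=
  ((Sym2.mem_and_mem_iff hne).mp ⟨hv, hw⟩)

lemma aux_edgeVerts_ncard [Fintype V] {G : SimpleGraph V} (M : Set (Sym2 V))
    (hM : M ⊆ G.edgeSet) (hns : NoSharedVertex M) :
    (edgeVerts M).ncard = 2 * M.ncard := by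
  classical
  revert hM hns
  induction M, (Set.toFinite M) using Set.Finite.induction_on with
  | empty => simp [edgeVerts]
  | @insert e S heS hS ih =>
    intro hM hns
    have hSsub : S ⊆ G.edgeSet := fun g hg => hM (Set.mem_insert_of_mem _ hg)
    have hSns : NoSharedVertex S := fun a ha b hb hab v hv =>
      hns a (Set.mem_insert_of_mem _ ha) b (Set.mem_insert_of_mem _ hb) hab v hv
    have he : e ∈ G.edgeSet := hM (Set.mem_insert _ _)
    obtain ⟨⟨a, b⟩, rfl⟩ : ∃ p : V × V, Sym2.mk p.1 p.2 = e := ⟨Quot.out e, Quot.out_eq e⟩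
    have hab : a ≠ b := by
      intro h; subst h; exact G.irrefl he
    have hsplit : edgeVerts (insert s(a,b) S) = {a, b} ∪ edgeVerts S := by
      ext v
      simp only [edgeVerts, Set.mem_setOf_eq, Set.mem_insert_iff, Set.mem_union,
        Sym2.mem_iff]
      aesop
    have hdisj : Disjoint ({a, b} : Set V) (edgeVerts S) := by
      rw [Set.disjoint_left]
      rintro v hv ⟨g, hg, hvg⟩
      have hne : s(a,b) ≠ g := by rintro rfl; exact heS hg
      refine hns s(a,b) (Set.mem_insert _ _) g (Set.mem_insert_of_mem _ hg) hne v ?_ hvg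
      rcases hv with rfl | rfl <;> simp
    rw [hsplit, Set.ncard_union_eq hdisj, Set.ncard_pair hab,
      Set.ncard_insert_of_notMem heS, ih hSsub hSns]
    ring

theorem stmt15 [Fintype V] (G : SimpleGraph V) (hG : NoIsolated G) :
    (∃ M : Set (Sym2 V), IsMinEvDomSet G M ∧ NoSharedVertex M) ∧
      prNum G ≤ 2 * evNum G := by
  classical
  -- the set of all edges is an ev-dominating set
  have hall : IsEvDomSet G G.edgeSet := by
    refine ⟨subset_rfl, fun v => ?_⟩
    obtain ⟨u, hu⟩ := hG v
    exact ⟨s(u, v), hu, Or.inl (by simp)⟩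
  have hSne : {n | ∃ M : Set (Sym2 V), IsEvDomSet G M ∧ M.ncard = n}.Nonempty :=
    ⟨_, G.edgeSet, hall, rfl⟩
  obtain ⟨M0, hM0, hM0card⟩ := Nat.sInf_mem hSne
  have hminM0 : IsMinEvDomSet G M0 :=
    ⟨hM0, fun M' hM' => hM0card ▸ Nat.sInf_le ⟨M', hM', rfl⟩⟩
  -- choose a minimum ev-dominating set with maximum vertex coverage
  have hTne : {k | ∃ M : Set (Sym2 V), IsMinEvDomSet G M ∧ (edgeVerts M).ncard = k}.Nonempty :=
    ⟨_, M0, hminM0, rfl⟩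
  have hTbdd : BddAbove {k | ∃ M : Set (Sym2 V), IsMinEvDomSet G M ∧ (edgeVerts M).ncard = k} := by
    refine ⟨Fintype.card V, ?_⟩
    rintro k ⟨M, -, rfl⟩
    calc (edgeVerts M).ncard ≤ (Set.univ : Set V).ncard :=
          Set.ncard_le_ncard (Set.subset_univ _) (Set.toFinite _)
      _ = Fintype.card V := by rw [Set.ncard_univ, Nat.card_eq_fintype_card]
  obtain ⟨M, hMmin, hMcov⟩ := Nat.sSup_mem hTne hTbdd
  have hmax : ∀ M' : Set (Sym2 V), IsMinEvDomSet G M' →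
      (edgeVerts M').ncard ≤ (edgeVerts M).ncard := fun M' h =>
    hMcov ▸ le_csSup hTbdd ⟨M', h, rfl⟩
  -- M has no shared vertex
  have hns : NoSharedVertex M := by
    by_contra hcon
    unfold NoSharedVertex at hcon
    push_neg at hcon
    obtain ⟨e, heM, f, hfM, hef, v, hve, hvf⟩ := hcon
    have hfE : f ∈ G.edgeSet := hMmin.1.1 hfM
    have heE : e ∈ G.edgeSet := hMmin.1.1 heM
    obtain ⟨w, hvw, rfl⟩ := aux_edge_rep hfE hvf
    have hpos : 0 < M.ncard := (Set.ncard_pos (Set.toFinite _)).mpr ⟨_, hfM⟩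
    by_cases hx : ∃ x, G.Adj w x ∧ x ≠ v ∧ x ∉ edgeVerts M
    · -- swap s(v,w) for s(w,x), contradicting coverage maximality
      obtain ⟨x, hwx, hxv, hxM⟩ := hx
      have hf'M : s(w, x) ∉ M := fun h => hxM ⟨s(w, x), h, by simp⟩
      set M' := insert s(w, x) (M \ {s(v, w)}) with hM'def
      have hsub : M' ⊆ G.edgeSet := by
        rintro g hg
        rcases Set.mem_insert_iff.mp hg with rfl | hg'
        · exact hwx
        · exact hMmin.1.1 hg'.1
      have hdom' : ∀ y, ∃ g ∈ M', EvDom G g y := by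
        intro y
        obtain ⟨g, hgM, hgy⟩ := hMmin.1.2 y
        by_cases hgf : g = s(v, w)
        · subst hgf
          have heM' : e ∈ M' := Set.mem_insert_of_mem _ ⟨heM, hef⟩
          rcases hgy with hy | ⟨u, hu, huy⟩
          · rw [Sym2.mem_iff] at hy
            rcases hy with rfl | rfl
            · exact ⟨e, heM', Or.inl hve⟩
            · exact ⟨e, heM', Or.inr ⟨v, hve, hvw⟩⟩
          · rw [Sym2.mem_iff] at hu
            rcases hu with rfl | rfl
            · exact ⟨e, heM', Or.inr ⟨u, hve, huy⟩⟩
            · exact ⟨s(u, x), Set.mem_insert _ _, Or.inr ⟨u, by simp, huy⟩⟩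
        · exact ⟨g, Set.mem_insert_of_mem _ ⟨hgM, hgf⟩, hgy⟩
      have hcard : M'.ncard = M.ncard := by
        rw [hM'def, Set.ncard_insert_of_notMem (fun h => hf'M h.1),
          Set.ncard_diff_singleton_of_mem hfM]
        omega
      have hmin' : IsMinEvDomSet G M' :=
        ⟨⟨hsub, hdom'⟩, fun M'' h'' => hcard ▸ hMmin.2 M'' h''⟩
      have hsubcov : edgeVerts M ⊆ edgeVerts M' := by
        rintro y ⟨g, hgM, hyg⟩
        by_cases hgf : g = s(v, w)
        · subst hgf
          rw [Sym2.mem_iff] at hyg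
          rcases hyg with rfl | rfl
          · exact ⟨e, Set.mem_insert_of_mem _ ⟨heM, hef⟩, hve⟩
          · exact ⟨s(y, x), Set.mem_insert _ _, by simp⟩
        · exact ⟨g, Set.mem_insert_of_mem _ ⟨hgM, hgf⟩, hyg⟩
      have hxM' : x ∈ edgeVerts M' := ⟨s(w, x), Set.mem_insert _ _, by simp⟩
      have hlt : (edgeVerts M).ncard < (edgeVerts M').ncard :=
        Set.ncard_lt_ncard ⟨hsubcov, fun h => hxM (h hxM')⟩ (Set.toFinite _)
      exact absurd (hmax M' hmin') (not_le.mpr hlt)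
    · -- drop s(v,w), contradicting minimality
      push_neg at hx
      have hdom' : IsEvDomSet G (M \ {s(v, w)}) := by
        refine ⟨fun g hg => hMmin.1.1 hg.1, fun y => ?_⟩
        obtain ⟨g, hgM, hgy⟩ := hMmin.1.2 y
        by_cases hgf : g = s(v, w)
        · subst hgf
          have heM' : e ∈ M \ {s(v, w)} := ⟨heM, hef⟩
          rcases hgy with hy | ⟨u, hu, huy⟩
          · rw [Sym2.mem_iff] at hy
            rcases hy with rfl | rfl
            · exact ⟨e, heM', Or.inl hve⟩
            · exact ⟨e, heM', Or.inr ⟨v, hve, hvw⟩⟩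
          · rw [Sym2.mem_iff] at hu
            rcases hu with rfl | rfl
            · exact ⟨e, heM', Or.inr ⟨u, hve, huy⟩⟩
            · by_cases hyv : y = v
              · subst hyv; exact ⟨e, heM', Or.inl hve⟩
              · obtain ⟨g', hg', hyg'⟩ := hx y huy hyv
                have hg'f : g' ≠ s(v, u) := by
                  rintro rfl
                  rw [Sym2.mem_iff] at hyg'
                  rcases hyg' with rfl | rfl
                  · exact hyv rfl
                  · exact G.irrefl huy
                exact ⟨g', ⟨hg', hg'f⟩, Or.inl hyg'⟩
        · exact ⟨g, ⟨hgM, hgf⟩, hgy⟩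
      have hle := hMmin.2 _ hdom'
      have hlt : (M \ {s(v, w)}).ncard < M.ncard :=
        Set.ncard_diff_singleton_lt_of_mem hfM (Set.toFinite _)
      omega
  -- M.ncard = evNum G
  have hMcard : M.ncard = evNum G := by
    refine le_antisymm ?_ (Nat.sInf_le ⟨M, hMmin.1, rfl⟩)
    rw [evNum, ← hM0card]
    exact hMmin.2 M0 hM0
  refine ⟨⟨M, hMmin, hns⟩, ?_⟩
  -- the endpoints of M form a paired-dominating set
  have hdom : IsDomSet G (edgeVerts M) := by
    intro y hy
    obtain ⟨g, hg, hgy⟩ := hMmin.1.2 y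
    rcases hgy with hyg | ⟨u, hu, huy⟩
    · exact absurd ⟨g, hg, hyg⟩ hy
    · exact ⟨u, ⟨g, hg, hu⟩, huy⟩
  have hpm : IsPMOn G (edgeVerts M) M := by
    refine ⟨hMmin.1.1, fun e he v hv => ⟨e, he, hv⟩, ?_⟩
    rintro y ⟨g, hg, hyg⟩
    refine ⟨g, ⟨hg, hyg⟩, ?_⟩
    rintro g' ⟨hg', hyg'⟩
    by_contra hne
    exact hns g' hg' g hg hne y hyg' hyg
  have hle : prNum G ≤ (edgeVerts M).ncard :=
    Nat.sInf_le ⟨edgeVerts M, ⟨hdom, M, hpm⟩, rfl⟩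
  rwa [aux_edgeVerts_ncard M hMmin.1.1 hns, hMcard] at hle
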